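/- For type A_{N−1}, for all j, k ∈ {1,…,N}, ∫₀^L ∫₀^W exp(−2πN y²/(LW)) · conj(M_j(x+iy)) M_k(x+iy) dy dx = δ_{jk} · (LW/√(2NW/L)) · e^{2πW J(j)²/(NL)}. -/

import Mathlib

open Complex MeasureTheory
open scoped Real ComplexConjugate

noncomputable section

/-- The Jacobi theta function θ₀. -/
def jtheta0 (v τ : ℂ) : ℂ :=
  ∑' n : ℤ, (-1 : ℂ) ^ n * Complex.exp (π * I * τ * (n : ℂ) ^ 2) *
    Complex.exp (2 * π * I * (n : ℂ) * v)

/-- The Jacobi theta function θ₁. -/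
def jtheta1 (v τ : ℂ) : ℂ :=
  I * ∑' n : ℤ, (-1 : ℂ) ^ n * Complex.exp (π * I * τ * ((n : ℂ) - 1 / 2) ^ 2) *
    Complex.exp ((2 * (n : ℂ) - 1) * π * I * v)

/-- The Jacobi theta function θ₂. -/
def jtheta2 (v τ : ℂ) : ℂ :=
  ∑' n : ℤ, Complex.exp (π * I * τ * ((n : ℂ) - 1 / 2) ^ 2) *
    Complex.exp ((2 * (n : ℂ) - 1) * π * I * v)

/-- The Jacobi theta function θ₃. -/
def jtheta3 (v τ : ℂ) : ℂ :=
  ∑' n : ℤ, Complex.exp (π * I * τ * (n : ℂ) ^ 2) * Complex.exp (2 * π * I * (n : ℂ) * v)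

/-- Dedekind's eta function. -/
def dedekindEta (τ : ℂ) : ℂ :=
  Complex.exp (π * I * τ / 12) * ∏' n : ℕ, (1 - Complex.exp (2 * π * I * ((n : ℂ) + 1) * τ))

/-- For type A_{N−1}: M_j(z) = e^{2πiJz/L} θ₂(Jτ + Nz/L; Nτ), with τ = iW/L. -/
def MA (N : ℕ) (L W : ℝ) (Jj : ℝ) (z : ℂ) : ℂ :=
  Complex.exp (2 * π * I * Jj * z / L) *
    jtheta2 ((Jj : ℂ) * (I * W / L) + N * z / L) (N * (I * W / L))

/-- J(j) = j − 1/2 for 1-based j; for the 0-based index j : Fin N this is j + 1/2. -/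
def JA {N : ℕ} (j : Fin N) : ℝ := (j : ℕ) + 1 / 2

lemma summable_exp_quad (a b c : ℝ) (ha : 0 < a) :
    Summable (fun n : ℤ => Real.exp (-a * n ^ 2 + b * n + c)) := by
  have h1 : Summable (fun n : ℤ => jacobiTheta₂_term n (-I * b / (2 * π)) ((a / π) * I)) := by
    rw [summable_jacobiTheta₂_term_iff]
    simp [div_pos ha Real.pi_pos]
  have h2 : Summable (fun n : ℤ => Real.exp (-a * n ^ 2 + b * n)) := by
    rw [← Complex.summable_ofReal]
    refine h1.congr fun n => ?_
    rw [jacobiTheta₂_term, Complex.ofReal_exp]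
    congr 1
    have hπ : (π : ℂ) ≠ 0 := Complex.ofReal_ne_zero.mpr Real.pi_ne_zero
    push_cast
    field_simp
    linear_combination ((a:ℂ) * n ^ 2 - b * n) * Complex.I_sq
  refine (h2.mul_right (Real.exp c)).congr fun n => ?_
  rw [← Real.exp_add]

/-- α_n = J + N(n-1/2) -/
def al (N : ℕ) (J : ℝ) (n : ℤ) : ℝ := J + N * ((n : ℝ) - 1 / 2)

/-- real part of the coefficient exponent -/
def cq (N : ℕ) (L W J : ℝ) (n : ℤ) : ℝ :=
  -(π * W / L) * (N * ((n : ℝ) - 1 / 2) ^ 2 + (2 * (n : ℝ) - 1) * J)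

def trm (N : ℕ) (L W J : ℝ) (n : ℤ) (z : ℂ) : ℂ :=
  Complex.exp ((cq N L W J n : ℂ) + 2 * π * I * (al N J n : ℂ) * z / L)

lemma MA_eq (N : ℕ) (L W J : ℝ) (hL : 0 < L) (z : ℂ) :
    MA N L W J z = ∑' n : ℤ, trm N L W J n z := by
  rw [MA, jtheta2, ← tsum_mul_left]
  refine tsum_congr fun n => ?_
  rw [trm, ← Complex.exp_add, ← Complex.exp_add]
  congr 1
  have hL' : (L : ℂ) ≠ 0 := Complex.ofReal_ne_zero.mpr hL.ne'
  rw [al, cq]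
  push_cast
  field_simp
  ring_nf
  simp only [Complex.I_sq]
  ring

lemma Hf_eq (N : ℕ) (L W Jj Jk : ℝ) (hL : 0 < L) (m n : ℤ) (x y g : ℝ) :
    (Real.exp g : ℂ) * (conj (trm N L W Jj m (x + I * y)) * trm N L W Jk n (x + I * y))
      = Complex.exp ((2 * π * (al N Jk n - al N Jj m) * x / L : ℝ) * I)
        * ((Real.exp (cq N L W Jj m + cq N L W Jk n) : ℝ) : ℂ)
        * ((Real.exp (g - 2 * π * (al N Jj m + al N Jk n) * y / L) : ℝ) : ℂ) := by
  have hL' : (L : ℂ) ≠ 0 := Complex.ofReal_ne_zero.mpr hL.ne'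
  rw [trm, trm, ← Complex.exp_conj]
  rw [Complex.ofReal_exp, Complex.ofReal_exp, Complex.ofReal_exp,
    ← Complex.exp_add, ← Complex.exp_add, ← Complex.exp_add, ← Complex.exp_add]
  congr 1
  simp only [map_add, map_mul, map_div₀, Complex.conj_ofReal, Complex.conj_I, map_ofNat]
  push_cast
  field_simp
  ring_nf
  simp only [Complex.I_sq]
  ring

lemma summable_exp_cq_lin (N : ℕ) (L W J : ℝ) (hN : 0 < N) (hL : 0 < L) (hW : 0 < W) (t : ℝ) :
    Summable (fun n : ℤ => Real.exp (cq N L W J n + t * al N J n)) := by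
  have ha : (0:ℝ) < π * N * W / L :=
    div_pos (mul_pos (mul_pos Real.pi_pos (by exact_mod_cast hN)) hW) hL
  refine (summable_exp_quad (π * N * W / L) (π * W / L * (N - 2 * J) + t * N)
    (-(π * W / L) * (N / 4 - J) + t * (J - N / 2)) ha).congr fun n => ?_
  rw [cq, al]
  congr 1
  field_simp
  ring

lemma norm_trm (N : ℕ) (L W J : ℝ) (hL : 0 < L) (n : ℤ) (x y : ℝ) :
    ‖trm N L W J n (x + I * y)‖
      = Real.exp (cq N L W J n - 2 * π * al N J n * y / L) := by
  have hL' : (L : ℂ) ≠ 0 := Complex.ofReal_ne_zero.mpr hL.ne'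
  have h : ((cq N L W J n : ℝ) : ℂ) + 2 * π * I * (al N J n : ℂ) * (x + I * y) / L
      = ((cq N L W J n - 2 * π * al N J n * y / L : ℝ) : ℂ)
        + ((2 * π * al N J n * x / L : ℝ) : ℂ) * I := by
    push_cast
    field_simp
    ring_nf
    simp only [Complex.I_sq]
    ring
  rw [trm, h, Complex.norm_exp]
  congr 1
  simp

lemma summable_norm_trm (N : ℕ) (L W J : ℝ) (hN : 0 < N) (hL : 0 < L) (hW : 0 < W) (x y : ℝ) :
    Summable (fun n : ℤ => ‖trm N L W J n (x + I * y)‖) := by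
  refine (summable_exp_cq_lin N L W J hN hL hW (-2 * π * y / L)).congr fun n => ?_
  rw [norm_trm N L W J hL n x y]
  congr 1
  field_simp
  ring

/-- expanded double-series term -/
def Ft (N : ℕ) (L W Jj Jk : ℝ) (p : ℤ × ℤ) (x y : ℝ) : ℂ :=
  Complex.exp ((2 * π * (al N Jk p.2 - al N Jj p.1) * x / L : ℝ) * I)
    * ((Real.exp (cq N L W Jj p.1 + cq N L W Jk p.2) : ℝ) : ℂ)
    * ((Real.exp (-(2 * π * N * y ^ 2 / (L * W))
        - 2 * π * (al N Jj p.1 + al N Jk p.2) * y / L) : ℝ) : ℂ)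

lemma integrand_eq (N : ℕ) (L W Jj Jk : ℝ) (hN : 0 < N) (hL : 0 < L) (hW : 0 < W) (x y : ℝ) :
    (Real.exp (-(2 * π * N * y ^ 2 / (L * W))) : ℂ)
        * (conj (MA N L W Jj (x + I * y)) * MA N L W Jk (x + I * y))
      = ∑' p : ℤ × ℤ, Ft N L W Jj Jk p x y := by
  rw [MA_eq N L W Jj hL, MA_eq N L W Jk hL]
  have hconj : conj (∑' n : ℤ, trm N L W Jj n (x + I * y))
      = ∑' n : ℤ, conj (trm N L W Jj n (x + I * y)) := by
    simp only [starRingEnd_apply]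
    exact tsum_star
  rw [hconj]
  simp only [starRingEnd_apply]
  rw [tsum_mul_tsum_of_summable_norm
    (((summable_norm_trm N L W Jj hN hL hW x y).congr fun n => (norm_star _).symm))
    (summable_norm_trm N L W Jk hN hL hW x y), ← tsum_mul_left]
  refine tsum_congr fun p => ?_
  have := Hf_eq N L W Jj Jk hL p.1 p.2 x y (-(2 * π * N * y ^ 2 / (L * W)))
  simp only [starRingEnd_apply] at this
  rw [← mul_assoc] at this ⊢
  exact this


/-- summable bound family -/
def Bb (N : ℕ) (L W J : ℝ) (m : ℤ) : ℝ := Real.exp (cq N L W J m + 2 * π * |al N J m| * W / L)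

lemma summable_Bb (N : ℕ) (L W J : ℝ) (hN : 0 < N) (hL : 0 < L) (hW : 0 < W) :
    Summable (fun m : ℤ => Bb N L W J m) := by
  refine Summable.of_nonneg_of_le (fun m => (Real.exp_pos _).le) (fun m => ?_)
    ((summable_exp_cq_lin N L W J hN hL hW (2 * π * W / L)).add
      (summable_exp_cq_lin N L W J hN hL hW (-(2 * π * W / L))))
  rcases abs_cases (al N J m) with ⟨h, _⟩ | ⟨h, _⟩ <;> rw [Bb, h]
  · refine le_add_of_le_of_nonneg (le_of_eq ?_) (Real.exp_pos _).le
    congr 1; ring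
  · refine le_add_of_nonneg_of_le (Real.exp_pos _).le (le_of_eq ?_)
    congr 1; ring

lemma norm_Ft (N : ℕ) (L W Jj Jk : ℝ) (p : ℤ × ℤ) (x y : ℝ) :
    ‖Ft N L W Jj Jk p x y‖
      = Real.exp (cq N L W Jj p.1 + cq N L W Jk p.2) *
        Real.exp (-(2 * π * N * y ^ 2 / (L * W))
          - 2 * π * (al N Jj p.1 + al N Jk p.2) * y / L) := by
  rw [Ft, norm_mul, norm_mul, Complex.norm_exp_ofReal_mul_I, one_mul,
    Complex.norm_real, Complex.norm_real, Real.norm_of_nonneg (Real.exp_pos _).le,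
    Real.norm_of_nonneg (Real.exp_pos _).le]

lemma norm_Ft_le (N : ℕ) (L W Jj Jk : ℝ) (hL : 0 < L) (hW : 0 < W)
    (p : ℤ × ℤ) (x y : ℝ) (hy0 : 0 ≤ y) (hyW : y ≤ W) :
    ‖Ft N L W Jj Jk p x y‖ ≤ Bb N L W Jj p.1 * Bb N L W Jk p.2 := by
  rw [norm_Ft, Bb, Bb, ← Real.exp_add, ← Real.exp_add, Real.exp_le_exp]
  have h1 : -(2 * π * N * y ^ 2 / (L * W)) ≤ 0 := neg_nonpos.mpr (by positivity)
  have h2 : -(2 * π * (al N Jj p.1 + al N Jk p.2) * y)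
      ≤ 2 * π * |al N Jj p.1| * W + 2 * π * |al N Jk p.2| * W := by
    have h3 := neg_abs_le (al N Jj p.1 + al N Jk p.2)
    have h4 := abs_add_le (al N Jj p.1) (al N Jk p.2)
    have h5 : |al N Jj p.1 + al N Jk p.2| * y ≤ (|al N Jj p.1| + |al N Jk p.2|) * W :=
      mul_le_mul h4 hyW hy0 (add_nonneg (abs_nonneg _) (abs_nonneg _))
    nlinarith [Real.pi_pos, abs_nonneg (al N Jj p.1 + al N Jk p.2),
      mul_le_mul_of_nonneg_right h3 hy0]
  have h6 : -(2 * π * (al N Jj p.1 + al N Jk p.2) * y) / L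
      ≤ (2 * π * |al N Jj p.1| * W + 2 * π * |al N Jk p.2| * W) / L := by gcongr
  rw [neg_div] at h6
  rw [add_div] at h6
  linarith


lemma cont_Ft (N : ℕ) (L W Jj Jk : ℝ) (p : ℤ × ℤ) (x : ℝ) :
    Continuous (fun y : ℝ => Ft N L W Jj Jk p x y) := by
  unfold Ft
  fun_prop

lemma summable_BbBb (N : ℕ) (L W Jj Jk : ℝ) (hN : 0 < N) (hL : 0 < L) (hW : 0 < W) :
    Summable (fun p : ℤ × ℤ => Bb N L W Jj p.1 * Bb N L W Jk p.2) :=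
  (summable_Bb N L W Jj hN hL hW).mul_of_nonneg (summable_Bb N L W Jk hN hL hW)
    (fun _ => (Real.exp_pos _).le) (fun _ => (Real.exp_pos _).le)

lemma inner_hasSum (N : ℕ) (L W Jj Jk : ℝ) (hN : 0 < N) (hL : 0 < L) (hW : 0 < W) (x : ℝ) :
    HasSum (fun p : ℤ × ℤ => ∫ y in (0:ℝ)..W, Ft N L W Jj Jk p x y)
      (∫ y in (0:ℝ)..W, ∑' p : ℤ × ℤ, Ft N L W Jj Jk p x y) := by
  exact intervalIntegral.hasSum_intervalIntegral_of_summable_norm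
    (f := fun p => ⟨fun y => Ft N L W Jj Jk p x y, cont_Ft N L W Jj Jk p x⟩)
    (Summable.of_nonneg_of_le (fun _ => norm_nonneg _)
      (fun p => (ContinuousMap.norm_le _ (by rw [Bb, Bb]; positivity)).mpr fun yy => by
        have hy : (yy : ℝ) ∈ Set.Icc 0 W := by
          have h2 := yy.2
          simp only [TopologicalSpace.Compacts.coe_mk] at h2
          rw [← Set.uIcc_of_le hW.le]
          exact h2
        simpa using norm_Ft_le N L W Jj Jk hL hW p x yy hy.1 hy.2)
      (summable_BbBb N L W Jj Jk hN hL hW))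

lemma integral_Ft_y (N : ℕ) (L W Jj Jk : ℝ) (p : ℤ × ℤ) (x : ℝ) :
    ∫ y in (0:ℝ)..W, Ft N L W Jj Jk p x y
      = Complex.exp ((2 * π * (al N Jk p.2 - al N Jj p.1) * x / L : ℝ) * I)
        * ((Real.exp (cq N L W Jj p.1 + cq N L W Jk p.2) : ℝ) : ℂ)
        * ((∫ y in (0:ℝ)..W, Real.exp (-(2 * π * N * y ^ 2 / (L * W))
            - 2 * π * (al N Jj p.1 + al N Jk p.2) * y / L) : ℝ) : ℂ) := by
  simp only [Ft]
  rw [intervalIntegral.integral_const_mul, intervalIntegral.integral_ofReal]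

lemma Rint_diag (N : ℕ) (L W J : ℝ) (hN : 0 < N) (hL : 0 < L) (hW : 0 < W) (n : ℤ) :
    Real.exp (cq N L W J n + cq N L W J n) *
        ∫ y in (0:ℝ)..W, Real.exp (-(2 * π * N * y ^ 2 / (L * W))
          - 2 * π * (al N J n + al N J n) * y / L)
      = Real.exp (2 * π * W * J ^ 2 / (N * L)) *
        ∫ u in (W * (J / N - 1 / 2) + n * W)..(W * (J / N - 1 / 2) + n * W + W),
          Real.exp (-(2 * π * N / (L * W)) * u ^ 2) := by
  have hNR : (0:ℝ) < N := by exact_mod_cast hN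
  rw [← intervalIntegral.integral_const_mul, ← intervalIntegral.integral_const_mul]
  have hcv := intervalIntegral.integral_comp_add_right (a := (0:ℝ)) (b := W)
    (fun u => Real.exp (2 * π * W * J ^ 2 / (N * L)) * Real.exp (-(2 * π * N / (L * W)) * u ^ 2))
    (W * (J / N - 1 / 2) + n * W)
  rw [zero_add] at hcv
  rw [show W * (J / N - 1 / 2) + n * W + W = W + (W * (J / N - 1 / 2) + n * W) by ring, ← hcv]
  refine intervalIntegral.integral_congr fun y _ => ?_
  rw [← Real.exp_add, ← Real.exp_add]
  congr 1
  simp only [cq, al]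
  field_simp
  ring


/-- the inner y-integral (real part) -/
def Rint (N : ℕ) (L W Jj Jk : ℝ) (p : ℤ × ℤ) : ℝ :=
  ∫ y in (0:ℝ)..W, Real.exp (-(2 * π * N * y ^ 2 / (L * W))
    - 2 * π * (al N Jj p.1 + al N Jk p.2) * y / L)

/-- the function of x left after y-integration -/
def Gt (N : ℕ) (L W Jj Jk : ℝ) (p : ℤ × ℤ) (x : ℝ) : ℂ :=
  Complex.exp ((2 * π * (al N Jk p.2 - al N Jj p.1) * x / L : ℝ) * I)
    * (((Real.exp (cq N L W Jj p.1 + cq N L W Jk p.2) : ℝ) : ℂ)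
      * ((Rint N L W Jj Jk p : ℝ) : ℂ))

lemma integral_Ft_y' (N : ℕ) (L W Jj Jk : ℝ) (p : ℤ × ℤ) (x : ℝ) :
    ∫ y in (0:ℝ)..W, Ft N L W Jj Jk p x y = Gt N L W Jj Jk p x := by
  rw [integral_Ft_y, Gt, Rint, mul_assoc]

lemma norm_Gt_le (N : ℕ) (L W Jj Jk : ℝ) (hN : 0 < N) (hL : 0 < L) (hW : 0 < W)
    (p : ℤ × ℤ) (x : ℝ) :
    ‖Gt N L W Jj Jk p x‖ ≤ Bb N L W Jj p.1 * Bb N L W Jk p.2 * W := by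
  rw [Gt, norm_mul, Complex.norm_exp_ofReal_mul_I, one_mul,
    ← Complex.ofReal_mul, Complex.norm_real]
  have hre : Real.exp (cq N L W Jj p.1 + cq N L W Jk p.2) * Rint N L W Jj Jk p
      = ∫ y in (0:ℝ)..W, Real.exp (cq N L W Jj p.1 + cq N L W Jk p.2) *
          Real.exp (-(2 * π * N * y ^ 2 / (L * W))
            - 2 * π * (al N Jj p.1 + al N Jk p.2) * y / L) := by
    rw [Rint, intervalIntegral.integral_const_mul]
  rw [hre]
  have hb := intervalIntegral.norm_integral_le_of_norm_le_const
    (C := Bb N L W Jj p.1 * Bb N L W Jk p.2) (a := (0:ℝ)) (b := W)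
    (f := fun y => Real.exp (cq N L W Jj p.1 + cq N L W Jk p.2) *
      Real.exp (-(2 * π * N * y ^ 2 / (L * W))
        - 2 * π * (al N Jj p.1 + al N Jk p.2) * y / L)) ?_
  · calc _ ≤ Bb N L W Jj p.1 * Bb N L W Jk p.2 * |W - 0| := hb
      _ = Bb N L W Jj p.1 * Bb N L W Jk p.2 * W := by
          rw [sub_zero, abs_of_pos hW]
  · intro y hy
    rw [Set.uIoc_of_le hW.le] at hy
    have := norm_Ft_le N L W Jj Jk hL hW p x y hy.1.le hy.2
    rw [norm_Ft] at this
    rwa [Real.norm_of_nonneg (by positivity)]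

lemma outer_hasSum (N : ℕ) (L W Jj Jk : ℝ) (hN : 0 < N) (hL : 0 < L) (hW : 0 < W) :
    HasSum (fun p : ℤ × ℤ => ∫ x in (0:ℝ)..L, Gt N L W Jj Jk p x)
      (∫ x in (0:ℝ)..L, ∑' p : ℤ × ℤ, Gt N L W Jj Jk p x) := by
  exact intervalIntegral.hasSum_intervalIntegral_of_summable_norm
    (f := fun p => ⟨fun x => Gt N L W Jj Jk p x, by unfold Gt; fun_prop⟩)
    (Summable.of_nonneg_of_le (fun _ => norm_nonneg _)
      (fun p => (ContinuousMap.norm_le _ (by rw [Bb, Bb]; positivity)).mpr fun xx =>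
        norm_Gt_le N L W Jj Jk hN hL hW p xx)
      ((summable_BbBb N L W Jj Jk hN hL hW).mul_right W))

lemma X_int (L : ℝ) (hL : 0 < L) (D : ℤ) :
    (∫ x in (0:ℝ)..L, Complex.exp ((2 * π * (D : ℝ) * x / L : ℝ) * I))
      = if D = 0 then (L : ℂ) else 0 := by
  split_ifs with hD
  · subst hD
    simp
  · have hc : ((2 * π * (D : ℝ) / L : ℝ) : ℂ) * I ≠ 0 := by
      apply mul_ne_zero _ Complex.I_ne_zero
      rw [Complex.ofReal_ne_zero]
      have : (D : ℝ) ≠ 0 := Int.cast_ne_zero.mpr hD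
      positivity
    have hcong : ∀ x : ℝ, Complex.exp ((2 * π * (D : ℝ) * x / L : ℝ) * I)
        = Complex.exp ((((2 * π * (D : ℝ) / L : ℝ) : ℂ) * I) * (x : ℝ)) := by
      intro x
      congr 1
      push_cast
      ring
    rw [intervalIntegral.integral_congr (fun x _ => hcong x),
      integral_exp_mul_complex hc]
    have h1 : (((2 * π * (D : ℝ) / L : ℝ) : ℂ) * I) * (L : ℂ) = (D : ℂ) * (2 * π * I) := by
      have hL' : (L : ℂ) ≠ 0 := Complex.ofReal_ne_zero.mpr hL.ne'
      push_cast
      field_simp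
    rw [h1, Complex.exp_int_mul_two_pi_mul_I]
    simp

lemma al_diff (N : ℕ) (j k : Fin N) (m n : ℤ) :
    al N (JA k) n - al N (JA j) m
      = ((((k : ℤ) - (j : ℤ) + (N : ℤ) * (n - m)) : ℤ) : ℝ) := by
  rw [al, al, JA, JA]
  push_cast
  ring

lemma D_zero (N : ℕ) (j k : Fin N) (m n : ℤ)
    (h : (k : ℤ) - (j : ℤ) + (N : ℤ) * (n - m) = 0) : j = k ∧ m = n := by
  have hj : ((j : ℕ) : ℤ) < N := by exact_mod_cast j.isLt
  have hk : ((k : ℕ) : ℤ) < N := by exact_mod_cast k.isLt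
  have hj0 : (0 : ℤ) ≤ ((j : ℕ) : ℤ) := Int.natCast_nonneg _
  have hk0 : (0 : ℤ) ≤ ((k : ℕ) : ℤ) := Int.natCast_nonneg _
  set d : ℤ := n - m with hd
  have hNd : (N : ℤ) * d = (j : ℤ) - k := by linarith
  have hNpos : (0 : ℤ) < N := by exact_mod_cast j.pos
  have hd0 : d = 0 := by
    rcases lt_trichotomy d 0 with h1 | h1 | h1
    · have h2 : (N : ℤ) * d ≤ (N : ℤ) * (-1) := by
        apply mul_le_mul_of_nonneg_left (by omega) (by positivity)
      rw [mul_neg_one] at h2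
      linarith
    · exact h1
    · have h2 : (N : ℤ) * 1 ≤ (N : ℤ) * d := by
        apply mul_le_mul_of_nonneg_left (by omega) (by positivity)
      rw [mul_one] at h2
      linarith
  constructor
  · have : ((j : ℕ) : ℤ) = ((k : ℕ) : ℤ) := by
      rw [hd0, mul_zero] at hNd
      linarith
    exact Fin.ext (by exact_mod_cast this)
  · omega

lemma gauss_hasSum (a b0 W : ℝ) (ha : 0 < a) (hW : 0 < W) :
    HasSum (fun n : ℤ => ∫ u in (b0 + n * W)..(b0 + n * W + W), Real.exp (-a * u ^ 2))
      (Real.sqrt (π / a)) := by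
  have hint : Integrable (fun u : ℝ => Real.exp (-a * u ^ 2)) := integrable_exp_neg_mul_sq ha
  have hpair : Pairwise (Function.onFun Disjoint
      fun n : ℤ => Set.Ioc (b0 + n • W) (b0 + (n + 1) • W)) := by
    intro m n hmn
    simp only [Function.onFun, zsmul_eq_mul]
    rw [Set.Ioc_disjoint_Ioc]
    push_cast
    rcases hmn.lt_or_gt with h | h
    · refine min_le_of_left_le (le_max_of_le_right ?_)
      have : ((m : ℝ) + 1) ≤ (n : ℝ) := by exact_mod_cast h
      nlinarith
    · refine min_le_of_right_le (le_max_of_le_left ?_)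
      have : ((n : ℝ) + 1) ≤ (m : ℝ) := by exact_mod_cast h
      nlinarith
  have hU := hasSum_integral_iUnion (μ := volume)
    (s := fun n : ℤ => Set.Ioc (b0 + n • W) (b0 + (n + 1) • W))
    (fun n => measurableSet_Ioc) hpair hint.integrableOn
  rw [iUnion_Ioc_add_zsmul hW b0, setIntegral_univ, integral_gaussian] at hU
  have heq : ∀ n : ℤ, (∫ u in (b0 + n * W)..(b0 + n * W + W), Real.exp (-a * u ^ 2))
      = ∫ u in Set.Ioc (b0 + n • W) (b0 + (n + 1) • W), Real.exp (-a * u ^ 2) := by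
    intro n
    rw [intervalIntegral.integral_of_le (by linarith : b0 + n * W ≤ b0 + n * W + W)]
    congr 1 <;> · push_cast [zsmul_eq_mul]; ring
  simp only [heq]
  exact hU


lemma sqrt_const (N : ℕ) (L W : ℝ) (hN : 0 < N) (hL : 0 < L) (hW : 0 < W) :
    L * Real.sqrt (π / (2 * π * N / (L * W))) = L * W / Real.sqrt (2 * N * W / L) := by
  have hNR : (0:ℝ) < N := by exact_mod_cast hN
  have h1 : π / (2 * π * N / (L * W)) = L * W / (2 * N) := by
    rw [div_div_eq_mul_div, div_eq_div_iff (by positivity) (by positivity)]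
    ring
  rw [h1]
  have hs : Real.sqrt (2 * N * W / L) ≠ 0 :=
    (Real.sqrt_pos.mpr (by positivity)).ne'
  rw [eq_div_iff hs, mul_assoc, ← Real.sqrt_mul (by positivity),
    show L * W / (2 * N) * (2 * N * W / L) = W ^ 2 by field_simp,
    Real.sqrt_sq hW.le]

theorem statement5 (N : ℕ) (hN : 1 ≤ N) (L W : ℝ) (hL : 0 < L) (hW : 0 < W)
    (j k : Fin N) :
    (∫ x in (0:ℝ)..L, ∫ y in (0:ℝ)..W,
        (Real.exp (-(2 * π * N * y ^ 2 / (L * W))) : ℂ) *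
          (conj (MA N L W (JA j) (x + I * y)) * MA N L W (JA k) (x + I * y)))
      = if j = k then
          ((L * W / Real.sqrt (2 * N * W / L) *
              Real.exp (2 * π * W * (JA j) ^ 2 / (N * L)) : ℝ) : ℂ)
        else 0 := by
  have hN0 : 0 < N := hN
  have hNR : (0:ℝ) < N := by exact_mod_cast hN0
  have step1 : (∫ x in (0:ℝ)..L, ∫ y in (0:ℝ)..W,
        (Real.exp (-(2 * π * N * y ^ 2 / (L * W))) : ℂ) *
          (conj (MA N L W (JA j) (x + I * y)) * MA N L W (JA k) (x + I * y)))
      = ∑' p : ℤ × ℤ, ∫ x in (0:ℝ)..L, Gt N L W (JA j) (JA k) p x := by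
    have hx : ∀ x : ℝ, (∫ y in (0:ℝ)..W,
        (Real.exp (-(2 * π * N * y ^ 2 / (L * W))) : ℂ) *
          (conj (MA N L W (JA j) (x + I * y)) * MA N L W (JA k) (x + I * y)))
        = ∑' p : ℤ × ℤ, Gt N L W (JA j) (JA k) p x := by
      intro x
      calc (∫ y in (0:ℝ)..W,
          (Real.exp (-(2 * π * N * y ^ 2 / (L * W))) : ℂ) *
            (conj (MA N L W (JA j) (x + I * y)) * MA N L W (JA k) (x + I * y)))
          = ∫ y in (0:ℝ)..W, ∑' p : ℤ × ℤ, Ft N L W (JA j) (JA k) p x y :=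
            intervalIntegral.integral_congr fun y _ =>
              integrand_eq N L W (JA j) (JA k) hN0 hL hW x y
        _ = ∑' p : ℤ × ℤ, ∫ y in (0:ℝ)..W, Ft N L W (JA j) (JA k) p x y :=
            ((inner_hasSum N L W (JA j) (JA k) hN0 hL hW x).tsum_eq).symm
        _ = ∑' p : ℤ × ℤ, Gt N L W (JA j) (JA k) p x :=
            tsum_congr fun p => integral_Ft_y' N L W (JA j) (JA k) p x
    rw [intervalIntegral.integral_congr fun x _ => hx x]
    exact ((outer_hasSum N L W (JA j) (JA k) hN0 hL hW).tsum_eq).symm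
  rw [step1]
  have hGt_int : ∀ p : ℤ × ℤ, (∫ x in (0:ℝ)..L, Gt N L W (JA j) (JA k) p x)
      = (if ((k : ℤ) - (j : ℤ) + (N : ℤ) * (p.2 - p.1) = 0) then (L : ℂ) else 0)
        * (((Real.exp (cq N L W (JA j) p.1 + cq N L W (JA k) p.2) : ℝ) : ℂ)
          * ((Rint N L W (JA j) (JA k) p : ℝ) : ℂ)) := by
    intro p
    simp only [Gt]
    rw [intervalIntegral.integral_mul_const]
    congr 1
    simp only [al_diff N j k p.1 p.2]
    exact X_int L hL _
  by_cases hjk : j = k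
  · subst hjk
    rw [if_pos rfl]
    have hinj : Function.Injective (fun n : ℤ => ((n, n) : ℤ × ℤ)) := by
      intro a b h
      exact (Prod.ext_iff.mp h).1
    have hsupp : Function.support
        (fun p : ℤ × ℤ => ∫ x in (0:ℝ)..L, Gt N L W (JA j) (JA j) p x)
        ⊆ Set.range (fun n : ℤ => ((n, n) : ℤ × ℤ)) := by
      intro p hp
      by_contra hpr
      apply hp
      show (∫ x in (0:ℝ)..L, Gt N L W (JA j) (JA j) p x) = 0
      rw [hGt_int p, if_neg, zero_mul]
      intro hD0
      obtain ⟨-, hmn⟩ := D_zero N j j p.1 p.2 hD0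
      exact hpr ⟨p.1, by rw [Prod.ext_iff]; exact ⟨rfl, hmn⟩⟩
    rw [← Function.Injective.tsum_eq hinj hsupp]
    have hdiag : ∀ n : ℤ, (∫ x in (0:ℝ)..L, Gt N L W (JA j) (JA j) (n, n) x)
        = ((L : ℝ) : ℂ) * (((Real.exp (2 * π * W * (JA j) ^ 2 / (N * L)) : ℝ) : ℂ)
          * ((∫ u in (W * ((JA j) / N - 1 / 2) + n * W)..(W * ((JA j) / N - 1 / 2) + n * W + W),
              Real.exp (-(2 * π * N / (L * W)) * u ^ 2) : ℝ) : ℂ)) := by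
      intro n
      rw [hGt_int (n, n), if_pos (by ring)]
      congr 1
      rw [← Complex.ofReal_mul, ← Complex.ofReal_mul]
      congr 1
      simp only [Rint]
      exact Rint_diag N L W (JA j) hN0 hL hW n
    rw [tsum_congr hdiag]
    have ha : (0:ℝ) < 2 * π * N / (L * W) := by positivity
    have hG := gauss_hasSum (2 * π * N / (L * W)) (W * ((JA j) / N - 1 / 2)) W ha hW
    have hGC : HasSum (fun n : ℤ =>
        ((∫ u in (W * ((JA j) / N - 1 / 2) + n * W)..(W * ((JA j) / N - 1 / 2) + n * W + W),
          Real.exp (-(2 * π * N / (L * W)) * u ^ 2) : ℝ) : ℂ))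
        ((Real.sqrt (π / (2 * π * N / (L * W))) : ℝ) : ℂ) :=
      Complex.ofRealCLM.hasSum hG
    have hGC2 := hGC.mul_left
      (((L : ℝ) : ℂ) * ((Real.exp (2 * π * W * (JA j) ^ 2 / (N * L)) : ℝ) : ℂ))
    rw [(hGC2.congr_fun fun n => by ring).tsum_eq]
    rw [← Complex.ofReal_mul, ← Complex.ofReal_mul]
    congr 1
    rw [show (L : ℝ) * Real.exp (2 * π * W * (JA j) ^ 2 / (N * L))
        * Real.sqrt (π / (2 * π * N / (L * W)))
        = (L * Real.sqrt (π / (2 * π * N / (L * W))))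
          * Real.exp (2 * π * W * (JA j) ^ 2 / (N * L)) by ring,
      sqrt_const N L W hN0 hL hW]
  · rw [if_neg hjk]
    have hz : ∀ p : ℤ × ℤ, (∫ x in (0:ℝ)..L, Gt N L W (JA j) (JA k) p x) = 0 := by
      intro p
      rw [hGt_int p, if_neg, zero_mul]
      intro hD0
      exact hjk (D_zero N j k p.1 p.2 hD0).1
    rw [tsum_congr hz]
    exact tsum_zero
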